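/- Every non-empty bispecial factor of a complementary symmetric Rote sequence v is ordinary (has bilateral order 0), and the empty word is a strong bispecial factor of v (has bilateral order 1). -/

import Mathlib

/-- Words over the binary alphabet `{0,1}`, represented as `ZMod 2`. -/
abbrev Word := List (ZMod 2)

/-- The difference map `S`. -/
def Sdiff (v : Word) : Word := List.zipWith (· + ·) v v.tail

/-- The letter-exchange morphism `E`. -/
def Ex (v : Word) : Word := v.map (· + 1)

/-- `m` is an occurrence of the word `w` in the sequence `s`. -/
def OccAt (s : ℕ → ZMod 2) (w : Word) (m : ℕ) : Prop :=
  w = List.ofFn fun i : Fin w.length => s (m + i)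

/-- `w` is a factor of the sequence `s`. -/
def IsFactor (s : ℕ → ZMod 2) (w : Word) : Prop := ∃ m, OccAt s w m

/-- `w` is a left special factor of `s`. -/
def LeftSpecial (s : ℕ → ZMod 2) (w : Word) : Prop :=
  IsFactor s ((0 : ZMod 2) :: w) ∧ IsFactor s ((1 : ZMod 2) :: w)

/-- `w` is a right special factor of `s`. -/
def RightSpecial (s : ℕ → ZMod 2) (w : Word) : Prop :=
  IsFactor s (w ++ [(0 : ZMod 2)]) ∧ IsFactor s (w ++ [(1 : ZMod 2)])

/-- `w` is a bispecial factor of `s`. -/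
def Bispecial (s : ℕ → ZMod 2) (w : Word) : Prop :=
  LeftSpecial s w ∧ RightSpecial s w

/-- Factor complexity of a sequence. -/
noncomputable def Cplx (s : ℕ → ZMod 2) (n : ℕ) : ℕ :=
  {w : Word | w.length = n ∧ IsFactor s w}.ncard

/-- `v` is a complementary symmetric Rote sequence. -/
def IsCSRote (v : ℕ → ZMod 2) : Prop :=
  (∀ n, 1 ≤ n → Cplx v n = 2 * n) ∧
  (∀ w : Word, IsFactor v w → IsFactor v (Ex w))

/-- The bilateral order `B(w)` of a factor `w` of `s`:
`B(w) = #{(a,b) : awb ∈ L(s)} − #{a : aw ∈ L(s)} − #{b : wb ∈ L(s)} + 1`. -/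
noncomputable def BilateralOrder (s : ℕ → ZMod 2) (w : Word) : ℤ :=
  ({p : ZMod 2 × ZMod 2 | IsFactor s (p.1 :: (w ++ [p.2]))}.ncard : ℤ)
    - ({a : ZMod 2 | IsFactor s (a :: w)}.ncard : ℤ)
    - ({b : ZMod 2 | IsFactor s (w ++ [b])}.ncard : ℤ) + 1

/- ### Auxiliary lemmas -/

lemma zmod2_cases : ∀ a : ZMod 2, a = 0 ∨ a = 1 := by decide

lemma occAt_iff {s : ℕ → ZMod 2} {w : Word} {m : ℕ} :
    OccAt s w m ↔ ∀ i (h : i < w.length), w[i] = s (m + i) := by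
  constructor
  · intro h i hi
    have h2 : w[i] = (List.ofFn fun j : Fin w.length => s (m + j))[i]'(by simpa using hi) :=
      List.getElem_of_eq h hi
    simpa using h2
  · intro h
    apply List.ext_getElem (by simp)
    intro i h1 h2
    simpa using h i h1

lemma occAt_append {s : ℕ → ZMod 2} {u w : Word} {m : ℕ} :
    OccAt s (u ++ w) m ↔ OccAt s u m ∧ OccAt s w (m + u.length) := by
  simp only [occAt_iff, List.length_append]
  constructor
  · intro h
    refine ⟨fun i hi => ?_, fun i hi => ?_⟩
    · have := h i (by omega)
      rwa [List.getElem_append_left hi] at this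
    · have := h (u.length + i) (by omega)
      rw [List.getElem_append_right (by omega)] at this
      simpa [Nat.add_assoc] using this
  · rintro ⟨h1, h2⟩ i hi
    rcases Nat.lt_or_ge i u.length with hl | hl
    · rw [List.getElem_append_left hl]; exact h1 i hl
    · rw [List.getElem_append_right hl]
      have := h2 (i - u.length) (by omega)
      rw [this]; congr 1; omega

lemma occAt_singleton {s : ℕ → ZMod 2} {b : ZMod 2} {m : ℕ} :
    OccAt s [b] m ↔ b = s m := by
  rw [occAt_iff]
  constructor
  · intro h; simpa using h 0 (by norm_num)
  · intro h i hi
    simp only [List.length_singleton] at hi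
    interval_cases i
    simpa

lemma occAt_cons {s : ℕ → ZMod 2} {a : ZMod 2} {w : Word} {m : ℕ} :
    OccAt s (a :: w) m ↔ a = s m ∧ OccAt s w (m + 1) := by
  have : a :: w = [a] ++ w := rfl
  rw [this, occAt_append, occAt_singleton]; simp

lemma factor_of_cons {s : ℕ → ZMod 2} {a : ZMod 2} {w : Word} (h : IsFactor s (a :: w)) :
    IsFactor s w := by
  obtain ⟨m, hm⟩ := h
  exact ⟨m + 1, (occAt_cons.mp hm).2⟩

lemma factor_of_append_singleton {s : ℕ → ZMod 2} {w : Word} {b : ZMod 2}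
    (h : IsFactor s (w ++ [b])) : IsFactor s w := by
  obtain ⟨m, hm⟩ := h
  exact ⟨m, (occAt_append.mp hm).1⟩

lemma right_ext {s : ℕ → ZMod 2} {w : Word} (h : IsFactor s w) :
    ∃ b, IsFactor s (w ++ [b]) := by
  obtain ⟨m, hm⟩ := h
  exact ⟨s (m + w.length), m, occAt_append.mpr ⟨hm, occAt_singleton.mpr rfl⟩⟩

lemma Ex_Ex (w : Word) : Ex (Ex w) = w := by
  simp only [Ex, List.map_map]
  convert List.map_id w using 2
  ext x
  simp only [Function.comp_apply, id]
  change x + 1 + 1 = x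
  have : (1 : ZMod 2) + 1 = 0 := by decide
  rw [add_assoc, this, add_zero]

lemma Ex_length (w : Word) : (Ex w).length = w.length := by simp [Ex]

lemma Ex_ne {w : Word} (h : w ≠ []) : Ex w ≠ w := by
  intro he
  obtain ⟨a, t, rfl⟩ := List.exists_cons_of_ne_nil h
  have : a + 1 = a := by simpa [Ex] using congrArg (fun l => l.headI) he
  have h2 : (1 : ZMod 2) = 0 := by
    have := congrArg (fun x => x - a) this
    simpa using this
  exact one_ne_zero h2

lemma Ex_cons (a : ZMod 2) (w : Word) : Ex (a :: w) = (a + 1) :: Ex w := rfl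

lemma Ex_append (u w : Word) : Ex (u ++ w) = Ex u ++ Ex w := by simp [Ex]

/- ### Finset counting machinery -/

open Classical in
noncomputable def FW (v : ℕ → ZMod 2) (n : ℕ) : Finset Word :=
  ((Finset.univ : Finset (Fin n → ZMod 2)).image List.ofFn).filter (fun w => IsFactor v w)

lemma mem_FW {v : ℕ → ZMod 2} {n : ℕ} {w : Word} :
    w ∈ FW v n ↔ w.length = n ∧ IsFactor v w := by
  classical
  simp only [FW, Finset.mem_filter, Finset.mem_image, Finset.mem_univ, true_and]
  constructor
  · rintro ⟨⟨f, rfl⟩, h⟩; exact ⟨by simp, h⟩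
  · rintro ⟨rfl, h⟩
    exact ⟨⟨fun i => w.get i, List.ofFn_get w⟩, h⟩

lemma Cplx_eq (v : ℕ → ZMod 2) (n : ℕ) : Cplx v n = (FW v n).card := by
  rw [Cplx, ← Set.ncard_coe_finset]
  congr 1
  ext w
  simp [mem_FW]

open Classical in
noncomputable def lsetF (v : ℕ → ZMod 2) (w : Word) : Finset (ZMod 2) :=
  Finset.univ.filter (fun a => IsFactor v (a :: w))

open Classical in
noncomputable def rsetF (v : ℕ → ZMod 2) (w : Word) : Finset (ZMod 2) :=
  Finset.univ.filter (fun b => IsFactor v (w ++ [b]))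

open Classical in
noncomputable def esetF (v : ℕ → ZMod 2) (w : Word) : Finset (ZMod 2 × ZMod 2) :=
  Finset.univ.filter (fun p => IsFactor v (p.1 :: (w ++ [p.2])))

lemma mem_lsetF {v : ℕ → ZMod 2} {w : Word} {a : ZMod 2} :
    a ∈ lsetF v w ↔ IsFactor v (a :: w) := by classical simp [lsetF]

lemma mem_rsetF {v : ℕ → ZMod 2} {w : Word} {b : ZMod 2} :
    b ∈ rsetF v w ↔ IsFactor v (w ++ [b]) := by classical simp [rsetF]

lemma mem_esetF {v : ℕ → ZMod 2} {w : Word} {p : ZMod 2 × ZMod 2} :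
    p ∈ esetF v w ↔ IsFactor v (p.1 :: (w ++ [p.2])) := by classical simp [esetF]

lemma card_right (v : ℕ → ZMod 2) (n : ℕ) :
    (FW v (n + 1)).card = ∑ u ∈ FW v n, (rsetF v u).card := by
  classical
  have hU : FW v (n + 1) =
      (FW v n).biUnion (fun u => (rsetF v u).image (fun b => u ++ [b])) := by
    ext z
    simp only [mem_FW, Finset.mem_biUnion, Finset.mem_image, mem_rsetF]
    constructor
    · rintro ⟨hlen, hf⟩
      have hne : z ≠ [] := by intro h; rw [h] at hlen; simp at hlen
      have hdec : z.dropLast ++ [z.getLast hne] = z := List.dropLast_append_getLast hne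
      refine ⟨z.dropLast, ⟨by simp [hlen], ?_⟩, z.getLast hne, ?_, hdec⟩
      · exact factor_of_append_singleton (by rwa [hdec])
      · rwa [hdec]
    · rintro ⟨u, hu, b, hb, rfl⟩
      exact ⟨by simp [hu.1], hb⟩
  rw [hU, Finset.card_biUnion]
  · apply Finset.sum_congr rfl
    intro u _
    exact Finset.card_image_of_injective _ (fun b b' h => by simpa using h)
  · intro u hu u' hu' hne
    simp only [Finset.disjoint_left, Finset.mem_image]
    rintro z ⟨b, _, rfl⟩ ⟨b', _, h⟩
    have hlen : u'.length = u.length := by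
      rw [(mem_FW.mp hu).1, (mem_FW.mp hu').1]
    exact hne ((List.append_inj h.symm (by simpa using hlen.symm)).1.symm ▸ rfl)

lemma rset_card_pos {v : ℕ → ZMod 2} {w : Word} (h : IsFactor v w) :
    1 ≤ (rsetF v w).card := by
  obtain ⟨b, hb⟩ := right_ext h
  exact Finset.card_pos.mpr ⟨b, mem_rsetF.mpr hb⟩

lemma rset_card_le (v : ℕ → ZMod 2) (w : Word) : (rsetF v w).card ≤ 2 := by
  classical
  calc (rsetF v w).card ≤ (Finset.univ : Finset (ZMod 2)).card := by
        apply Finset.card_le_card; intro b _; exact Finset.mem_univ b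
    _ = 2 := by decide

lemma eset_card_split (v : ℕ → ZMod 2) (w : Word) :
    (esetF v w).card =
      (rsetF v ((0 : ZMod 2) :: w)).card + (rsetF v ((1 : ZMod 2) :: w)).card := by
  classical
  have h : ∀ a : ZMod 2, (esetF v w).filter (fun p => p.1 = a) =
      (rsetF v (a :: w)).image (fun b => (a, b)) := by
    intro a
    ext p
    simp only [Finset.mem_filter, mem_esetF, Finset.mem_image, mem_rsetF]
    constructor
    · rintro ⟨hf, hp⟩
      exact ⟨p.2, by rw [List.cons_append]; rwa [← hp], by rw [← hp]⟩
    · rintro ⟨b, hb, rfl⟩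
      exact ⟨by rwa [List.cons_append] at hb, rfl⟩
  have hfib := Finset.card_eq_sum_card_fiberwise
    (f := fun p : ZMod 2 × ZMod 2 => p.1) (s := esetF v w) (t := Finset.univ)
    (fun x _ => Finset.mem_univ _)
  rw [hfib]
  have huniv : (Finset.univ : Finset (ZMod 2)) = {0, 1} := by decide
  rw [huniv, Finset.sum_insert (by decide), Finset.sum_singleton, h 0, h 1,
    Finset.card_image_of_injective _ (fun b b' hh => by simpa using hh),
    Finset.card_image_of_injective _ (fun b b' hh => by simpa using hh)]

lemma bilateral_eq (v : ℕ → ZMod 2) (w : Word) :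
    BilateralOrder v w =
      ((esetF v w).card : ℤ) - (lsetF v w).card - (rsetF v w).card + 1 := by
  classical
  have he : {p : ZMod 2 × ZMod 2 | IsFactor v (p.1 :: (w ++ [p.2]))}.ncard
      = (esetF v w).card := by
    rw [← Set.ncard_coe_finset]; congr 1; ext p; simp [esetF]
  have hl : {a : ZMod 2 | IsFactor v (a :: w)}.ncard = (lsetF v w).card := by
    rw [← Set.ncard_coe_finset]; congr 1; ext a; simp [lsetF]
  have hr : {b : ZMod 2 | IsFactor v (w ++ [b])}.ncard = (rsetF v w).card := by
    rw [← Set.ncard_coe_finset]; congr 1; ext b; simp [rsetF]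
  rw [BilateralOrder, he, hl, hr]

lemma Ex_rs {v : ℕ → ZMod 2} (hE : ∀ w : Word, IsFactor v w → IsFactor v (Ex w))
    {w : Word} (h : (rsetF v w).card = 2) : (rsetF v (Ex w)).card = 2 := by
  classical
  have huniv : rsetF v w = Finset.univ :=
    Finset.eq_univ_of_card _ (h.trans (by decide))
  have h2 : rsetF v (Ex w) = Finset.univ := by
    apply Finset.eq_univ_iff_forall.mpr
    intro b
    rw [mem_rsetF]
    have hb1 : IsFactor v (w ++ [b + 1]) := by
      rw [← mem_rsetF, huniv]; exact Finset.mem_univ _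
    have := hE _ hb1
    rw [Ex_append] at this
    have hb : Ex [b + 1] = [b] := by
      show [b + 1 + 1] = [b]
      have h11 : ∀ x : ZMod 2, x + 1 + 1 = x := by decide
      rw [h11]
    rwa [hb] at this
  rw [h2]; decide

open Classical in
noncomputable def RSF (v : ℕ → ZMod 2) (n : ℕ) : Finset Word :=
  (FW v n).filter (fun u => (rsetF v u).card = 2)

lemma mem_RSF {v : ℕ → ZMod 2} {n : ℕ} {u : Word} :
    u ∈ RSF v n ↔ u ∈ FW v n ∧ (rsetF v u).card = 2 := by
  classical simp [RSF]

lemma RSF_card {v : ℕ → ZMod 2} (hC : ∀ n, 1 ≤ n → Cplx v n = 2 * n)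
    {n : ℕ} (hn : 1 ≤ n) : (RSF v n).card = 2 := by
  classical
  have h1 : (FW v (n + 1)).card = 2 * n + 2 := by
    rw [← Cplx_eq, hC (n + 1) (by omega)]; ring
  have h0 : (FW v n).card = 2 * n := by rw [← Cplx_eq, hC n hn]
  have hsplit : ∑ u ∈ FW v n, (rsetF v u).card = (FW v n).card + (RSF v n).card := by
    rw [RSF, Finset.card_filter, Finset.card_eq_sum_ones (FW v n),
      ← Finset.sum_add_distrib]
    apply Finset.sum_congr rfl
    intro u hu
    have hp : 1 ≤ (rsetF v u).card := rset_card_pos (mem_FW.mp hu).2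
    have hle : (rsetF v u).card ≤ 2 := rset_card_le v u
    by_cases hc : (rsetF v u).card = 2
    · simp [hc]
    · have h1' : (rsetF v u).card = 1 := by omega
      simp [h1', hc]
  have hcr := card_right v n
  rw [h1, hsplit, h0] at hcr
  omega

/-- every non-empty bispecial factor of a complementary symmetric Rote
sequence `v` is ordinary (`B(w) = 0`), and the empty word is a strong bispecial factor
of `v` with `B(ε) = 1`. -/
theorem rote_bispecial_ordinary (v : ℕ → ZMod 2) (hrote : IsCSRote v) :
    (∀ w : Word, w ≠ [] → Bispecial v w → BilateralOrder v w = 0) ∧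
    (Bispecial v [] ∧ BilateralOrder v [] = 1) := by
  obtain ⟨hC, hE⟩ := hrote
  constructor
  · intro w hw hbs
    obtain ⟨⟨hl0, hl1⟩, hr0, hr1⟩ := hbs
    set n := w.length with hn_def
    have hn : 1 ≤ n := by
      rcases w with _ | _
      · exact absurd rfl hw
      · simp [hn_def]
    have hwf : IsFactor v w := factor_of_cons hl0
    -- the left and right extension sets are full
    have hlset : (lsetF v w).card = 2 := by
      have huniv : lsetF v w = Finset.univ := by
        apply Finset.eq_univ_iff_forall.mpr
        intro a
        rcases zmod2_cases a with rfl | rfl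
        · exact mem_lsetF.mpr hl0
        · exact mem_lsetF.mpr hl1
      rw [huniv]; decide
    have hrset : (rsetF v w).card = 2 := by
      have huniv : rsetF v w = Finset.univ := by
        apply Finset.eq_univ_iff_forall.mpr
        intro b
        rcases zmod2_cases b with rfl | rfl
        · exact mem_rsetF.mpr hr0
        · exact mem_rsetF.mpr hr1
      rw [huniv]; decide
    -- the right special factors of length n are exactly w and Ex w
    have hne' : Ex w ≠ w := Ex_ne hw
    have hwRS : w ∈ RSF v n := mem_RSF.mpr ⟨mem_FW.mpr ⟨rfl, hwf⟩, hrset⟩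
    have hExRS : Ex w ∈ RSF v n :=
      mem_RSF.mpr ⟨mem_FW.mpr ⟨Ex_length w, hE w hwf⟩, Ex_rs hE hrset⟩
    have hRSn : RSF v n = {w, Ex w} := by
      symm
      apply Finset.eq_of_subset_of_card_le
      · exact Finset.insert_subset_iff.mpr ⟨hwRS, Finset.singleton_subset_iff.mpr hExRS⟩
      · rw [RSF_card hC hn,
          Finset.card_insert_of_notMem (by simpa using hne'.symm),
          Finset.card_singleton]
    -- fiber decomposition of the extension pairs
    have hsum := eset_card_split v w
    have hp0 : 1 ≤ (rsetF v ((0 : ZMod 2) :: w)).card := rset_card_pos hl0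
    have hp1 : 1 ≤ (rsetF v ((1 : ZMod 2) :: w)).card := rset_card_pos hl1
    have hle0 : (rsetF v ((0 : ZMod 2) :: w)).card ≤ 2 := rset_card_le v _
    have hle1 : (rsetF v ((1 : ZMod 2) :: w)).card ≤ 2 := rset_card_le v _
    -- the number of extension pairs is not 4
    have h4 : (esetF v w).card ≠ 4 := by
      intro h4
      have hc0 : (rsetF v ((0 : ZMod 2) :: w)).card = 2 := by omega
      have hc1 : (rsetF v ((1 : ZMod 2) :: w)).card = 2 := by omega
      have m0 : ((0 : ZMod 2) :: w) ∈ RSF v (n + 1) :=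
        mem_RSF.mpr ⟨mem_FW.mpr ⟨by simp [hn_def], hl0⟩, hc0⟩
      have m1 : ((1 : ZMod 2) :: w) ∈ RSF v (n + 1) :=
        mem_RSF.mpr ⟨mem_FW.mpr ⟨by simp [hn_def], hl1⟩, hc1⟩
      have hEx0 : Ex ((0 : ZMod 2) :: w) = (1 : ZMod 2) :: Ex w := by
        rw [Ex_cons]; norm_num
      have m2 : ((1 : ZMod 2) :: Ex w) ∈ RSF v (n + 1) := by
        refine mem_RSF.mpr ⟨mem_FW.mpr ⟨by simp [Ex_length, hn_def], ?_⟩, ?_⟩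
        · have := hE _ hl0; rwa [hEx0] at this
        · have := Ex_rs hE hc0; rwa [hEx0] at this
      have hsub3 : ({(0 : ZMod 2) :: w, (1 : ZMod 2) :: w, (1 : ZMod 2) :: Ex w} :
          Finset Word) ⊆ RSF v (n + 1) := by
        intro z hz
        simp only [Finset.mem_insert, Finset.mem_singleton] at hz
        rcases hz with rfl | rfl | rfl
        · exact m0
        · exact m1
        · exact m2
      have hcard3 : ({(0 : ZMod 2) :: w, (1 : ZMod 2) :: w, (1 : ZMod 2) :: Ex w} :
          Finset Word).card = 3 := by
        rw [Finset.card_insert_of_notMem, Finset.card_insert_of_notMem,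
          Finset.card_singleton]
        · simp only [Finset.mem_singleton]
          intro h
          exact hne' (by injection h with _ h2; exact h2.symm)
        · simp only [Finset.mem_insert, Finset.mem_singleton]
          rintro (h | h) <;> · injection h with h1 _; exact absurd h1 (by decide)
      have hle' := Finset.card_le_card hsub3
      rw [RSF_card hC (by omega), hcard3] at hle'
      omega
    -- the number of extension pairs is not 2
    have h2 : (esetF v w).card ≠ 2 := by
      intro h2
      have hall : ∀ a : ZMod 2, (rsetF v (a :: w)).card = 1 := by
        intro a
        rcases zmod2_cases a with rfl | rfl <;> omega
      have hpos : 0 < (RSF v (n + 1)).card := by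
        rw [RSF_card hC (by omega)]; omega
      obtain ⟨z, hz⟩ := Finset.card_pos.mp hpos
      obtain ⟨hzF, hzr⟩ := mem_RSF.mp hz
      obtain ⟨hzlen, hzf⟩ := mem_FW.mp hzF
      rcases z with _ | ⟨a, u'⟩
      · simp at hzlen
      have hu'len : u'.length = n := by simpa using hzlen
      have hu'f : IsFactor v u' := factor_of_cons hzf
      have hsub : rsetF v (a :: u') ⊆ rsetF v u' := by
        intro b hb
        rw [mem_rsetF] at hb ⊢
        exact factor_of_cons (by rwa [List.cons_append] at hb)
      have hu'r : (rsetF v u').card = 2 := by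
        have := Finset.card_le_card hsub
        have := rset_card_le v u'
        omega
      have hu'RS : u' ∈ RSF v n := mem_RSF.mpr ⟨mem_FW.mpr ⟨hu'len, hu'f⟩, hu'r⟩
      rw [hRSn] at hu'RS
      simp only [Finset.mem_insert, Finset.mem_singleton] at hu'RS
      rcases hu'RS with rfl | rfl
      · have := hall a; omega
      · have hz2 := Ex_rs hE hzr
        have hEz : Ex (a :: Ex w) = (a + 1) :: w := by rw [Ex_cons, Ex_Ex]
        rw [hEz] at hz2
        have := hall (a + 1)
        omega
    have he3 : (esetF v w).card = 3 := by omega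
    rw [bilateral_eq, he3, hlset, hrset]
    norm_num
  · -- the empty word
    have h1card : (FW v 1).card = 2 := by rw [← Cplx_eq, hC 1 le_rfl]
    have hsub1 : FW v 1 ⊆ ({[(0 : ZMod 2)], [(1 : ZMod 2)]} : Finset Word) := by
      intro z hz
      obtain ⟨hlen, _⟩ := mem_FW.mp hz
      rcases z with _ | ⟨a, t⟩
      · simp at hlen
      · rcases t with _ | _
        · rcases zmod2_cases a with rfl | rfl <;> simp
        · simp at hlen
    have heq1 : FW v 1 = ({[(0 : ZMod 2)], [(1 : ZMod 2)]} : Finset Word) :=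
      Finset.eq_of_subset_of_card_le hsub1 (by rw [h1card]; decide)
    have hf0 : IsFactor v [(0 : ZMod 2)] := by
      have : [(0 : ZMod 2)] ∈ FW v 1 := by rw [heq1]; simp
      exact (mem_FW.mp this).2
    have hf1 : IsFactor v [(1 : ZMod 2)] := by
      have : [(1 : ZMod 2)] ∈ FW v 1 := by rw [heq1]; simp
      exact (mem_FW.mp this).2
    have hbse : Bispecial v [] :=
      ⟨⟨hf0, hf1⟩, by simpa using hf0, by simpa using hf1⟩
    refine ⟨hbse, ?_⟩
    -- all four words of length 2 are factors
    have h2card : (FW v 2).card = 4 := by rw [← Cplx_eq, hC 2 (by omega)]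
    have hsub2 : FW v 2 ⊆ ({[(0:ZMod 2),(0:ZMod 2)], [(0:ZMod 2),(1:ZMod 2)],
        [(1:ZMod 2),(0:ZMod 2)], [(1:ZMod 2),(1:ZMod 2)]} : Finset Word) := by
      intro z hz
      obtain ⟨hlen, _⟩ := mem_FW.mp hz
      rcases z with _ | ⟨a, t⟩
      · simp at hlen
      · rcases t with _ | ⟨b, t'⟩
        · simp at hlen
        · rcases t' with _ | _
          · rcases zmod2_cases a with rfl | rfl <;> rcases zmod2_cases b with rfl | rfl <;>
              simp
          · simp at hlen
    have heq2 : FW v 2 = ({[(0:ZMod 2),(0:ZMod 2)], [(0:ZMod 2),(1:ZMod 2)],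
        [(1:ZMod 2),(0:ZMod 2)], [(1:ZMod 2),(1:ZMod 2)]} : Finset Word) :=
      Finset.eq_of_subset_of_card_le hsub2
        (by rw [h2card]; decide)
    have hall2 : ∀ a b : ZMod 2, IsFactor v [a, b] := by
      intro a b
      have : [a, b] ∈ FW v 2 := by
        rw [heq2]
        rcases zmod2_cases a with rfl | rfl <;> rcases zmod2_cases b with rfl | rfl <;> simp
      exact (mem_FW.mp this).2
    have heset : esetF v [] = Finset.univ := by
      apply Finset.eq_univ_iff_forall.mpr
      intro p
      rw [mem_esetF]
      simpa using hall2 p.1 p.2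
    have hlset : lsetF v [] = Finset.univ := by
      apply Finset.eq_univ_iff_forall.mpr
      intro a
      rw [mem_lsetF]
      rcases zmod2_cases a with rfl | rfl
      · exact hf0
      · exact hf1
    have hrset : rsetF v [] = Finset.univ := by
      apply Finset.eq_univ_iff_forall.mpr
      intro b
      rw [mem_rsetF]
      rcases zmod2_cases b with rfl | rfl
      · simpa using hf0
      · simpa using hf1
    rw [bilateral_eq, heset, hlset, hrset]
    norm_num
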